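/- Difference-in-differences representation: under the assumptions of consistency, exchangeability over treatment in each population, positivity, and transportability of conditional mean differences (A4'), the identified average treatment effect satisfies φ = E[ τ₁(X) − τ₀(X) | S=1 ], where τ₁(X) = E[Y | X, S=1, A=1] − E[Y | X, S=1, A=0] and τ₀(X) = E[Y | X, S=0, A=2] − E[Y | X, S=0, A=0]; moreover under A4' these equal the conditional causal contrasts E[Y^{1} − Y^{0} | X, S=1] and E[Y^{2} − Y^{0} | X, S=1] respectively, so φ = E[Y^{1} − Y^{2} | S=1]. -/
import Mathlib


open scoped Classical BigOperators
open Finset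

noncomputable section

/-- Indicator of a proposition. -/
def ind (P : Prop) : ℝ := if P then 1 else 0

/-- Expectation with respect to weights `p` on a finite outcome space. -/
def pexp {Ω : Type*} [Fintype Ω] (p : Ω → ℝ) (f : Ω → ℝ) : ℝ := ∑ ω, p ω * f ω

/-- Probability of an event. -/
def prob {Ω : Type*} [Fintype Ω] (p : Ω → ℝ) (B : Ω → Prop) : ℝ :=
  pexp p (fun ω => ind (B ω))

/-- Conditional expectation of `f` given event `B`. -/
def cexp {Ω : Type*} [Fintype Ω] (p : Ω → ℝ) (f : Ω → ℝ) (B : Ω → Prop) : ℝ :=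
  pexp p (fun ω => f ω * ind (B ω)) / prob p B

/-- Conditional probability of `B` given `C`. -/
def cprob {Ω : Type*} [Fintype Ω] (p : Ω → ℝ) (B C : Ω → Prop) : ℝ :=
  prob p (fun ω => B ω ∧ C ω) / prob p C

/-- Conditional outcome mean `g_{s,a}(x) = E[Y | X = x, S = s, A = a]`. -/
def gfun {Ω 𝒳 : Type*} [Fintype Ω] (p : Ω → ℝ) (X : Ω → 𝒳) (S A : Ω → ℕ)
    (Y : Ω → ℝ) (s a : ℕ) (x : 𝒳) : ℝ :=
  cexp p Y (fun ω => X ω = x ∧ S ω = s ∧ A ω = a)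

/-- Standardized functional `γ_{s,a} = E[ E[Y | X, S=s, A=a] | S=1 ]`. -/
def gam {Ω 𝒳 : Type*} [Fintype Ω] (p : Ω → ℝ) (X : Ω → 𝒳) (S A : Ω → ℕ)
    (Y : Ω → ℝ) (s a : ℕ) : ℝ :=
  cexp p (fun ω => gfun p X S A Y s a (X ω)) (fun ω => S ω = 1)

/-- Participation probability `p_s(x) = Pr[S = s | X = x]`. -/
def psel {Ω 𝒳 : Type*} [Fintype Ω] (p : Ω → ℝ) (X : Ω → 𝒳) (S : Ω → ℕ)
    (s : ℕ) (x : 𝒳) : ℝ :=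
  cprob p (fun ω => S ω = s) (fun ω => X ω = x)

/-- Treatment probability `e_{s,a}(x) = Pr[A = a | X = x, S = s]`. -/
def etrt {Ω 𝒳 : Type*} [Fintype Ω] (p : Ω → ℝ) (X : Ω → 𝒳) (S A : Ω → ℕ)
    (s a : ℕ) (x : 𝒳) : ℝ :=
  cprob p (fun ω => A ω = a) (fun ω => X ω = x ∧ S ω = s)

/-- Weight `w_{s,a}(X,S,A) = I(S=s, A=a) p_1(X) / (e_{s,a}(X) p_s(X))`. -/
def wgt {Ω 𝒳 : Type*} [Fintype Ω] (p : Ω → ℝ) (X : Ω → 𝒳) (S A : Ω → ℕ)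
    (s a : ℕ) (ω : Ω) : ℝ :=
  ind (S ω = s ∧ A ω = a) * psel p X S 1 (X ω) /
    (etrt p X S A s a (X ω) * psel p X S s (X ω))

/-- Influence function `Γ_{s,a}(O)`. -/
def Gam {Ω 𝒳 : Type*} [Fintype Ω] (p : Ω → ℝ) (X : Ω → 𝒳) (S A : Ω → ℕ)
    (Y : Ω → ℝ) (s a : ℕ) (ω : Ω) : ℝ :=
  (1 / prob p (fun ω' => S ω' = 1)) *
    (ind (S ω = 1) * (gfun p X S A Y s a (X ω) - gam p X S A Y s a)
      + wgt p X S A s a ω * (Y ω - gfun p X S A Y s a (X ω)))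

/-- Variance of `f` under `p`. -/
def pvar {Ω : Type*} [Fintype Ω] (p : Ω → ℝ) (f : Ω → ℝ) : ℝ :=
  pexp p (fun ω => (f ω - pexp p f) ^ 2)

lemma ind_nonneg' (P : Prop) : 0 ≤ ind P := by
  unfold ind; split <;> norm_num

lemma prob_nonneg' {Ω : Type*} [Fintype Ω] (p : Ω → ℝ) (hp0 : ∀ ω, 0 ≤ p ω)
    (B : Ω → Prop) : 0 ≤ prob p B :=
  Finset.sum_nonneg fun ω _ => mul_nonneg (hp0 ω) (ind_nonneg' _)

lemma prob_pos_of_mem' {Ω : Type*} [Fintype Ω] (p : Ω → ℝ) (hp0 : ∀ ω, 0 ≤ p ω)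
    (B : Ω → Prop) (ω₀ : Ω) (hω : 0 < p ω₀) (hB : B ω₀) : 0 < prob p B := by
  refine Finset.sum_pos' (fun ω _ => mul_nonneg (hp0 ω) (ind_nonneg' _)) ⟨ω₀, Finset.mem_univ _, ?_⟩
  simp [ind, hB, hω]

lemma prob_pos_of_cprob_pos' {Ω : Type*} [Fintype Ω] (p : Ω → ℝ) (hp0 : ∀ ω, 0 ≤ p ω)
    (B C : Ω → Prop) (h : 0 < cprob p B C) : 0 < prob p (fun ω => B ω ∧ C ω) := by
  rcases (prob_nonneg' p hp0 (fun ω => B ω ∧ C ω)).lt_or_eq with h' | h'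
  · exact h'
  · exfalso; unfold cprob at h; rw [← h'] at h; simp at h

lemma cexp_sub' {Ω : Type*} [Fintype Ω] (p : Ω → ℝ) (f g : Ω → ℝ) (B : Ω → Prop) :
    cexp p (fun ω => f ω - g ω) B = cexp p f B - cexp p g B := by
  unfold cexp pexp
  rw [← sub_div]
  congr 1
  rw [← Finset.sum_sub_distrib]
  exact Finset.sum_congr rfl fun ω _ => by ring

lemma cexp_def' {Ω : Type*} [Fintype Ω] (p : Ω → ℝ) (f : Ω → ℝ) (B : Ω → Prop) :
    cexp p f B = pexp p (fun ω => f ω * ind (B ω)) / prob p B := rfl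

lemma gfun_eq_cexp' {Ω 𝒳 : Type*} [Fintype Ω] (p : Ω → ℝ) (X : Ω → 𝒳) (S A : Ω → ℕ)
    (Y : Ω → ℝ) (Ypo : ℕ → Ω → ℝ) (hcons : ∀ ω a, A ω = a → Ypo a ω = Y ω)
    (s a : ℕ) (x : 𝒳)
    (hex : cexp p (Ypo a) (fun ω => X ω = x ∧ S ω = s) =
      cexp p (Ypo a) (fun ω => X ω = x ∧ S ω = s ∧ A ω = a)) :
    gfun p X S A Y s a x = cexp p (Ypo a) (fun ω => X ω = x ∧ S ω = s) := by
  rw [hex]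
  unfold gfun cexp pexp
  congr 1
  refine Finset.sum_congr rfl fun ω _ => ?_
  by_cases h : A ω = a
  · dsimp only; rw [hcons ω a h]
  · simp [ind, h]

/-- Tower property: `E[E[f | X, B] ; B] = E[f ; B]` on numerators. -/
lemma pexp_tower' {Ω 𝒳 : Type*} [Fintype Ω] (p : Ω → ℝ) (hp0 : ∀ ω, 0 ≤ p ω)
    (X : Ω → 𝒳) (B : Ω → Prop) (f : Ω → ℝ) :
    pexp p (fun ω => cexp p f (fun ω' => X ω' = X ω ∧ B ω') * ind (B ω)) =
      pexp p (fun ω => f ω * ind (B ω)) := by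
  classical
  unfold pexp
  rw [← Finset.sum_fiberwise_of_maps_to (g := X) (t := Finset.univ.image X)
        (fun ω _ => Finset.mem_image_of_mem X (Finset.mem_univ ω))
        (fun ω => p ω * (cexp p f (fun ω' => X ω' = X ω ∧ B ω') * ind (B ω))),
      ← Finset.sum_fiberwise_of_maps_to (g := X) (t := Finset.univ.image X)
        (fun ω _ => Finset.mem_image_of_mem X (Finset.mem_univ ω))
        (fun ω => p ω * (f ω * ind (B ω)))]
  refine Finset.sum_congr rfl fun x _ => ?_
  set D : ℝ := ∑ ω ∈ Finset.univ.filter (fun ω => X ω = x), p ω * ind (B ω) with hDdef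
  have hD : D = prob p (fun ω' => X ω' = x ∧ B ω') := by
    rw [hDdef]
    unfold prob pexp
    rw [Finset.sum_filter]
    refine Finset.sum_congr rfl fun ω _ => ?_
    by_cases h : X ω = x <;> simp [ind, h]
  have hN : (∑ ω ∈ Finset.univ.filter (fun ω => X ω = x), p ω * (f ω * ind (B ω))) =
      pexp p (fun ω => f ω * ind (X ω = x ∧ B ω)) := by
    unfold pexp
    rw [Finset.sum_filter]
    refine Finset.sum_congr rfl fun ω _ => ?_
    by_cases h : X ω = x <;> simp [ind, h]
  have hL : (∑ ω ∈ Finset.univ.filter (fun ω => X ω = x),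
      p ω * (cexp p f (fun ω' => X ω' = X ω ∧ B ω') * ind (B ω))) =
      cexp p f (fun ω' => X ω' = x ∧ B ω') * D := by
    rw [hDdef, Finset.mul_sum]
    refine Finset.sum_congr rfl fun ω hω => ?_
    rw [(Finset.mem_filter.1 hω).2]
    ring
  rw [hL, hN]
  have hDnn : 0 ≤ D := Finset.sum_nonneg fun ω _ => mul_nonneg (hp0 ω) (ind_nonneg' _)
  rcases hDnn.lt_or_eq with hpos | hzero
  · unfold cexp
    rw [← hD, div_mul_cancel₀ _ hpos.ne']
  · have hterm : ∀ ω ∈ Finset.univ.filter (fun ω => X ω = x), p ω * ind (B ω) = 0 := by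
      intro ω hω
      have := (Finset.sum_eq_zero_iff_of_nonneg
        (fun ω _ => mul_nonneg (hp0 ω) (ind_nonneg' _))).1 hzero.symm
      exact this ω hω
    have hN0 : pexp p (fun ω => f ω * ind (X ω = x ∧ B ω)) = 0 := by
      rw [← hN]
      refine Finset.sum_eq_zero fun ω hω => ?_
      have h0 := hterm ω hω
      calc p ω * (f ω * ind (B ω)) = f ω * (p ω * ind (B ω)) := by ring
        _ = 0 := by rw [h0, mul_zero]
    rw [hN0, ← hzero, mul_zero]

lemma cexp_tower' {Ω 𝒳 : Type*} [Fintype Ω] (p : Ω → ℝ) (hp0 : ∀ ω, 0 ≤ p ω)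
    (X : Ω → 𝒳) (B : Ω → Prop) (f : Ω → ℝ) :
    cexp p (fun ω => cexp p f (fun ω' => X ω' = X ω ∧ B ω')) B = cexp p f B := by
  rw [cexp_def' p (fun ω => cexp p f (fun ω' => X ω' = X ω ∧ B ω')) B,
    cexp_def' p f B, pexp_tower' p hp0 X B f]

theorem statement19
    {Ω 𝒳 : Type*} [Fintype Ω] (p : Ω → ℝ)
    (hp0 : ∀ ω, 0 ≤ p ω) (hp1 : ∑ ω, p ω = 1)
    (X : Ω → 𝒳) (S A : Ω → ℕ) (Y : Ω → ℝ) (Ypo : ℕ → Ω → ℝ)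
    (hS : 0 < prob p (fun ω => S ω = 1))
    (hcons : ∀ ω a, A ω = a → Ypo a ω = Y ω)
    (hexch1 : ∀ x, ∀ a ∈ ({0, 1} : Set ℕ),
      0 < prob p (fun ω => X ω = x ∧ S ω = 1) →
      cexp p (Ypo a) (fun ω => X ω = x ∧ S ω = 1) =
        cexp p (Ypo a) (fun ω => X ω = x ∧ S ω = 1 ∧ A ω = a))
    (hpos1 : ∀ x, ∀ a ∈ ({0, 1} : Set ℕ),
      0 < prob p (fun ω => X ω = x ∧ S ω = 1) →
      0 < cprob p (fun ω => A ω = a) (fun ω => X ω = x ∧ S ω = 1))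
    (hexch0 : ∀ x, ∀ a ∈ ({0, 2} : Set ℕ),
      0 < prob p (fun ω => X ω = x ∧ S ω = 0) →
      cexp p (Ypo a) (fun ω => X ω = x ∧ S ω = 0) =
        cexp p (Ypo a) (fun ω => X ω = x ∧ S ω = 0 ∧ A ω = a))
    (hpos0 : ∀ x, ∀ a ∈ ({0, 2} : Set ℕ),
      0 < prob p (fun ω => X ω = x ∧ S ω = 0) →
      0 < cprob p (fun ω => A ω = a) (fun ω => X ω = x ∧ S ω = 0))
    (hA5 : ∀ x, 0 < prob p (fun ω => X ω = x ∧ S ω = 1) →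
      0 < cprob p (fun ω => S ω = 0) (fun ω => X ω = x))
    (hA4' : ∀ x, 0 < prob p (fun ω => X ω = x ∧ S ω = 1) →
      cexp p (fun ω => Ypo 2 ω - Ypo 0 ω) (fun ω => X ω = x ∧ S ω = 1) =
        cexp p (fun ω => Ypo 2 ω - Ypo 0 ω) (fun ω => X ω = x ∧ S ω = 0)) :
    (gam p X S A Y 1 1 - gam p X S A Y 1 0) -
        (gam p X S A Y 0 2 - gam p X S A Y 0 0) =
      cexp p (fun ω =>
        (gfun p X S A Y 1 1 (X ω) - gfun p X S A Y 1 0 (X ω)) -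
          (gfun p X S A Y 0 2 (X ω) - gfun p X S A Y 0 0 (X ω)))
        (fun ω => S ω = 1) ∧
    (∀ x, 0 < prob p (fun ω => X ω = x ∧ S ω = 1) →
      gfun p X S A Y 1 1 x - gfun p X S A Y 1 0 x =
        cexp p (fun ω => Ypo 1 ω - Ypo 0 ω) (fun ω => X ω = x ∧ S ω = 1) ∧
      gfun p X S A Y 0 2 x - gfun p X S A Y 0 0 x =
        cexp p (fun ω => Ypo 2 ω - Ypo 0 ω) (fun ω => X ω = x ∧ S ω = 1)) ∧
    (gam p X S A Y 1 1 - gam p X S A Y 1 0) -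
        (gam p X S A Y 0 2 - gam p X S A Y 0 0) =
      cexp p (fun ω => Ypo 1 ω - Ypo 2 ω) (fun ω => S ω = 1) := by
  have part1 : (gam p X S A Y 1 1 - gam p X S A Y 1 0) -
      (gam p X S A Y 0 2 - gam p X S A Y 0 0) =
      cexp p (fun ω =>
        (gfun p X S A Y 1 1 (X ω) - gfun p X S A Y 1 0 (X ω)) -
          (gfun p X S A Y 0 2 (X ω) - gfun p X S A Y 0 0 (X ω)))
        (fun ω => S ω = 1) := by
    unfold gam
    rw [cexp_sub' p (fun ω => gfun p X S A Y 1 1 (X ω) - gfun p X S A Y 1 0 (X ω))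
        (fun ω => gfun p X S A Y 0 2 (X ω) - gfun p X S A Y 0 0 (X ω)),
      cexp_sub' p (fun ω => gfun p X S A Y 1 1 (X ω)) (fun ω => gfun p X S A Y 1 0 (X ω)),
      cexp_sub' p (fun ω => gfun p X S A Y 0 2 (X ω)) (fun ω => gfun p X S A Y 0 0 (X ω))]
  have part2 : ∀ x, 0 < prob p (fun ω => X ω = x ∧ S ω = 1) →
      gfun p X S A Y 1 1 x - gfun p X S A Y 1 0 x =
        cexp p (fun ω => Ypo 1 ω - Ypo 0 ω) (fun ω => X ω = x ∧ S ω = 1) ∧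
      gfun p X S A Y 0 2 x - gfun p X S A Y 0 0 x =
        cexp p (fun ω => Ypo 2 ω - Ypo 0 ω) (fun ω => X ω = x ∧ S ω = 1) := by
    intro x hx
    have hx0 : 0 < prob p (fun ω => X ω = x ∧ S ω = 0) := by
      have h := prob_pos_of_cprob_pos' p hp0 _ _ (hA5 x hx)
      have heq : (fun ω => S ω = 0 ∧ X ω = x) = (fun ω => X ω = x ∧ S ω = 0) := by
        funext ω; exact propext and_comm
      rwa [heq] at h
    constructor
    · rw [gfun_eq_cexp' p X S A Y Ypo hcons 1 1 x (hexch1 x 1 (by simp) hx),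
        gfun_eq_cexp' p X S A Y Ypo hcons 1 0 x (hexch1 x 0 (by simp) hx),
        ← cexp_sub']
    · rw [gfun_eq_cexp' p X S A Y Ypo hcons 0 2 x (hexch0 x 2 (by simp) hx0),
        gfun_eq_cexp' p X S A Y Ypo hcons 0 0 x (hexch0 x 0 (by simp) hx0),
        ← cexp_sub', ← hA4' x hx]
  refine ⟨part1, part2, ?_⟩
  rw [part1]
  have step : cexp p (fun ω =>
      (gfun p X S A Y 1 1 (X ω) - gfun p X S A Y 1 0 (X ω)) -
        (gfun p X S A Y 0 2 (X ω) - gfun p X S A Y 0 0 (X ω)))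
      (fun ω => S ω = 1) =
      cexp p (fun ω => cexp p (fun ω' => Ypo 1 ω' - Ypo 2 ω')
        (fun ω' => X ω' = X ω ∧ S ω' = 1)) (fun ω => S ω = 1) := by
    rw [cexp_def', cexp_def']
    congr 1
    unfold pexp
    refine Finset.sum_congr rfl fun ω _ => ?_
    dsimp only
    by_cases hpω : p ω = 0
    · rw [hpω]; ring
    by_cases hs : S ω = 1
    · have hpωpos : 0 < p ω := lt_of_le_of_ne (hp0 ω) (Ne.symm hpω)
      have hxpos : 0 < prob p (fun ω' => X ω' = X ω ∧ S ω' = 1) :=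
        prob_pos_of_mem' p hp0 _ ω hpωpos ⟨rfl, hs⟩
      obtain ⟨h1, h2⟩ := part2 (X ω) hxpos
      congr 1
      rw [h1, h2, ← cexp_sub' p (fun ω' => Ypo 1 ω' - Ypo 0 ω') (fun ω' => Ypo 2 ω' - Ypo 0 ω')]
      have hfuneq : (fun ω' => Ypo 1 ω' - Ypo 0 ω' - (Ypo 2 ω' - Ypo 0 ω')) =
          (fun ω' => Ypo 1 ω' - Ypo 2 ω') := by funext ω'; ring
      rw [hfuneq]
    · simp [ind, hs]
  rw [step, cexp_tower' p hp0 X (fun ω => S ω = 1) (fun ω => Ypo 1 ω - Ypo 2 ω)]
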